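/- arXiv:1511.05080 — 4 statements merged into one kernel-verified Lean document; each statement's English description precedes it below -/
import Mathlib

section
/- Fix constants c₀, c₁ ∈ (0,1). For every incompressible unit vector x ∈ Incomp(c₀,c₁) ⊂ S^{n−1}, at least ⌈(1/2)c₀c₁²n⌉ coordinates x_k of x satisfy c₁/√(2n) ≤ |x_k| ≤ 1/√(c₀n). -/
/-- A vector in `ℝⁿ` is sparse if its support has at most `c₀ n` coordinates. -/
def Sparse {n : ℕ} (c₀ : ℝ) (y : EuclideanSpace ℝ (Fin n)) : Prop :=
  ((Finset.univ.filter fun i => y i ≠ 0).card : ℝ) ≤ c₀ * n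

/-- A unit vector is compressible if it is within distance `c₁` of the set of sparse vectors. -/
def Compressible {n : ℕ} (c₀ c₁ : ℝ) (x : EuclideanSpace ℝ (Fin n)) : Prop :=
  ‖x‖ = 1 ∧ ∃ y : EuclideanSpace ℝ (Fin n), Sparse c₀ y ∧ ‖x - y‖ ≤ c₁

/-- A unit vector is incompressible if it is not compressible. -/
def Incompressible {n : ℕ} (c₀ c₁ : ℝ) (x : EuclideanSpace ℝ (Fin n)) : Prop :=
  ‖x‖ = 1 ∧ ¬ ∃ y : EuclideanSpace ℝ (Fin n), Sparse c₀ y ∧ ‖x - y‖ ≤ c₁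

/-- Incompressible vectors are spread: at least `⌈(1/2)c₀c₁²n⌉` coordinates satisfy
`c₁/√(2n) ≤ |x_k| ≤ 1/√(c₀ n)`. -/
theorem stmt7 {n : ℕ} (c₀ c₁ : ℝ) (h₀ : c₀ ∈ Set.Ioo (0 : ℝ) 1) (h₁ : c₁ ∈ Set.Ioo (0 : ℝ) 1)
    (x : EuclideanSpace ℝ (Fin n)) (hx : Incompressible c₀ c₁ x) :
    ⌈(1 / 2 : ℝ) * c₀ * c₁ ^ 2 * n⌉₊ ≤
      (Finset.univ.filter fun k =>
        c₁ / Real.sqrt (2 * n) ≤ |x k| ∧ |x k| ≤ 1 / Real.sqrt (c₀ * n)).card := by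
  obtain ⟨hx1, hx2⟩ := hx
  obtain ⟨hc0, hc0'⟩ := h₀
  obtain ⟨hc1, hc1'⟩ := h₁
  rcases Nat.eq_zero_or_pos n with hn | hn
  · exfalso
    have hx0 : x = 0 := by subst hn; exact PiLp.ext fun i => i.elim0
    rw [hx0, norm_zero] at hx1
    exact zero_ne_one hx1
  have hnpos : (0:ℝ) < n := by exact_mod_cast hn
  have hc0n : (0:ℝ) < c₀ * n := mul_pos hc0 hnpos
  have h2n : (0:ℝ) < 2 * n := by linarith
  have hsq1 : (1 / Real.sqrt (c₀ * n)) ^ 2 = 1 / (c₀ * n) := by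
    rw [div_pow, one_pow, Real.sq_sqrt hc0n.le]
  have hsq2 : (c₁ / Real.sqrt (2 * n)) ^ 2 = c₁ ^ 2 / (2 * n) := by
    rw [div_pow, Real.sq_sqrt h2n.le]
  have hsum : ∑ i, x i ^ 2 = 1 := by
    have h := EuclideanSpace.norm_eq x
    rw [hx1] at h
    have h2 : ∑ i, ‖x i‖ ^ 2 = 1 := by
      have h0 : (0:ℝ) ≤ ∑ i, ‖x i‖ ^ 2 := Finset.sum_nonneg fun i _ => sq_nonneg _
      nlinarith [Real.sq_sqrt h0, h.symm]
    simpa [Real.norm_eq_abs, sq_abs] using h2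
  set B := Finset.univ.filter (fun k : Fin n => 1 / Real.sqrt (c₀ * n) < |x k|) with hBdef
  have hBsum : (B.card : ℝ) * (1 / (c₀ * n)) ≤ 1 := by
    calc (B.card : ℝ) * (1/(c₀*n)) ≤ ∑ k ∈ B, x k ^ 2 := by
          rw [← nsmul_eq_mul]
          apply Finset.card_nsmul_le_sum
          intro k hk
          have hk' := (Finset.mem_filter.mp hk).2
          have hpos : (0:ℝ) ≤ 1 / Real.sqrt (c₀*n) := by positivity
          calc 1/(c₀*n) = (1/Real.sqrt (c₀*n))^2 := hsq1.symm
            _ ≤ |x k|^2 := by apply pow_le_pow_left₀ hpos hk'.le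
            _ = x k ^ 2 := sq_abs _
      _ ≤ ∑ k, x k ^ 2 := Finset.sum_le_sum_of_subset_of_nonneg
            (Finset.filter_subset _ _) (fun i _ _ => sq_nonneg _)
      _ = 1 := hsum
  have hBcard : (B.card : ℝ) ≤ c₀ * n := by
    rw [mul_one_div, div_le_one hc0n] at hBsum
    exact hBsum
  set y : EuclideanSpace ℝ (Fin n) :=
    WithLp.toLp 2 (fun k => if 1 / Real.sqrt (c₀ * n) < |x k| then x k else 0) with hydef
  have hysparse : Sparse c₀ y := by
    unfold Sparse
    have hsub : (Finset.univ.filter fun i => y i ≠ 0) ⊆ B := by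
      intro i hi
      simp only [Finset.mem_filter, Finset.mem_univ, true_and] at hi ⊢
      by_contra h
      apply hi
      simp only [hydef, PiLp.toLp_apply]
      rw [if_neg]
      intro hc
      exact h (Finset.mem_filter.mpr ⟨Finset.mem_univ _, hc⟩)
    calc ((Finset.univ.filter fun i => y i ≠ 0).card : ℝ) ≤ (B.card : ℝ) := by
          exact_mod_cast Finset.card_le_card hsub
      _ ≤ c₀ * n := hBcard
  have hc₁lt : c₁ < ‖x - y‖ := by
    by_contra h
    exact hx2 ⟨y, hysparse, le_of_not_gt h⟩
  have hnormsq : ‖x - y‖ ^ 2 = ∑ k, (x k - y k) ^ 2 := by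
    rw [EuclideanSpace.norm_eq, Real.sq_sqrt (Finset.sum_nonneg fun i _ => sq_nonneg _)]
    simp [Real.norm_eq_abs, sq_abs]
  have hkey : c₁ ^ 2 < ∑ k, (x k - y k) ^ 2 := by
    rw [← hnormsq]
    exact pow_lt_pow_left₀ hc₁lt hc1.le (by norm_num)
  set A := Finset.univ.filter (fun k : Fin n =>
    c₁ / Real.sqrt (2*n) ≤ |x k| ∧ |x k| ≤ 1 / Real.sqrt (c₀*n)) with hAdef
  have hterm : ∀ k, (x k - y k) ^ 2 = if 1 / Real.sqrt (c₀ * n) < |x k| then 0 else x k ^ 2 := by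
    intro k
    simp only [hydef, PiLp.toLp_apply]
    split_ifs <;> ring
  have hsplit : ∑ k, (x k - y k) ^ 2 ≤ (A.card : ℝ) * (1/(c₀*n)) + c₁^2/2 := by
    rw [← Finset.sum_filter_add_sum_filter_not Finset.univ (fun k =>
      c₁ / Real.sqrt (2*n) ≤ |x k| ∧ |x k| ≤ 1 / Real.sqrt (c₀*n)) (fun k => (x k - y k)^2)]
    have part1 : ∑ k ∈ A, (x k - y k) ^ 2 ≤ (A.card : ℝ) * (1/(c₀*n)) := by
      rw [← nsmul_eq_mul]
      apply Finset.sum_le_card_nsmul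
      intro k hk
      rw [hterm k]
      by_cases h : 1 / Real.sqrt (c₀ * n) < |x k|
      · rw [if_pos h]; positivity
      · rw [if_neg h]
        have hk' := (Finset.mem_filter.mp hk).2.2
        calc x k ^ 2 = |x k| ^ 2 := (sq_abs _).symm
          _ ≤ (1 / Real.sqrt (c₀*n)) ^ 2 := pow_le_pow_left₀ (abs_nonneg _) hk' 2
          _ = 1/(c₀*n) := hsq1
    have part2 : ∑ k ∈ Finset.univ.filter (fun k => ¬(c₁ / Real.sqrt (2*n) ≤ |x k| ∧
        |x k| ≤ 1 / Real.sqrt (c₀*n))), (x k - y k) ^ 2 ≤ c₁^2/2 := by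
      calc ∑ k ∈ Finset.univ.filter (fun k => ¬(c₁ / Real.sqrt (2*n) ≤ |x k| ∧
            |x k| ≤ 1 / Real.sqrt (c₀*n))), (x k - y k) ^ 2
          ≤ (Finset.univ.filter (fun k : Fin n => ¬(c₁ / Real.sqrt (2*n) ≤ |x k| ∧
            |x k| ≤ 1 / Real.sqrt (c₀*n)))).card • (c₁^2/(2*n)) := by
            apply Finset.sum_le_card_nsmul
            intro k hk
            rw [hterm k]
            by_cases h : 1 / Real.sqrt (c₀ * n) < |x k|
            · rw [if_pos h]; positivity
            · rw [if_neg h]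
              have hk' := (Finset.mem_filter.mp hk).2
              push_neg at hk'
              have hlow : |x k| < c₁ / Real.sqrt (2*n) := by
                by_contra hle
                exact h (hk' (le_of_not_gt hle))
              calc x k ^ 2 = |x k| ^ 2 := (sq_abs _).symm
                _ ≤ (c₁ / Real.sqrt (2*n)) ^ 2 := pow_le_pow_left₀ (abs_nonneg _) hlow.le 2
                _ = c₁^2/(2*n) := hsq2
        _ ≤ c₁^2/2 := by
            rw [nsmul_eq_mul]
            have hcard : ((Finset.univ.filter (fun k : Fin n => ¬(c₁ / Real.sqrt (2*n) ≤ |x k| ∧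
                |x k| ≤ 1 / Real.sqrt (c₀*n)))).card : ℝ) ≤ n := by
              exact_mod_cast (Finset.card_filter_le _ _).trans_eq (Finset.card_univ.trans (Fintype.card_fin n))
            have hpos : (0:ℝ) ≤ c₁^2/(2*n) := by positivity
            calc _ ≤ (n:ℝ) * (c₁^2/(2*n)) := mul_le_mul_of_nonneg_right hcard hpos
              _ = c₁^2/2 := by field_simp
      
    exact add_le_add part1 part2
  have hfinal : (1 / 2 : ℝ) * c₀ * c₁ ^ 2 * n < (A.card : ℝ) := by
    have h1 : c₁^2 < (A.card : ℝ) * (1/(c₀*n)) + c₁^2/2 := lt_of_lt_of_le hkey hsplit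
    have h2 : c₁^2/2 * (c₀*n) < (A.card : ℝ) := by
      rw [mul_one_div] at h1
      have : c₁^2/2 < (A.card : ℝ) / (c₀*n) := by linarith
      calc c₁^2/2 * (c₀*n) < (A.card : ℝ) / (c₀*n) * (c₀*n) := by
            exact mul_lt_mul_of_pos_right this hc0n
        _ = (A.card : ℝ) := div_mul_cancel₀ _ hc0n.ne'
    nlinarith [h2]
  rw [Nat.ceil_le]
  exact hfinal.le
end

section
/- Fix c₀, c₁ ∈ (0,1) and suppose n ≥ 2/c₀. Then the set Comp(c₀,c₁) of compressible unit vectors in S^{n−1} admits a (3c₁)-net of cardinality at most (18/(c₀c₁))^{c₀n}. -/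
open MeasureTheory Metric Finset

/-- volume bound for separated families on the sphere -/
lemma sep_bound {m : ℕ} (hm : 1 ≤ m) {ε : ℝ} (hε : 0 < ε)
    (F : Finset (EuclideanSpace ℝ (Fin m)))
    (hunit : ∀ y ∈ F, ‖y‖ = 1)
    (hsep : ∀ a ∈ F, ∀ b ∈ F, a ≠ b → ε < ‖a - b‖) :
    (F.card : ℝ) * (ε / 2) ^ m ≤ (1 + ε / 2) ^ m := by
  haveI : Nontrivial (EuclideanSpace ℝ (Fin m)) := by
    apply Module.nontrivial_of_finrank_pos (R := ℝ)
    rw [finrank_euclideanSpace_fin]; omega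
  have hball : ∀ x : EuclideanSpace ℝ (Fin m), volume (ball x (ε / 2)) =
      ENNReal.ofReal ((ε / 2) ^ m) * volume (ball (0 : EuclideanSpace ℝ (Fin m)) 1) := by
    intro x
    rw [Measure.addHaar_ball volume x (by positivity), finrank_euclideanSpace_fin]
  have hdisj : (F : Set (EuclideanSpace ℝ (Fin m))).PairwiseDisjoint
      fun y => ball y (ε / 2) := by
    intro a ha b hb hab
    apply ball_disjoint_ball
    rw [dist_eq_norm]
    linarith [hsep a ha b hb hab]
  have hsub : ∀ y ∈ F, ball y (ε / 2) ⊆ ball (0 : EuclideanSpace ℝ (Fin m)) (1 + ε / 2) := by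
    intro y hy z hz
    rw [mem_ball, dist_zero_right]
    have h1 : ‖z‖ ≤ ‖z - y‖ + ‖y‖ := by
      calc ‖z‖ = ‖z - y + y‖ := by rw [sub_add_cancel]
      _ ≤ ‖z - y‖ + ‖y‖ := norm_add_le _ _
    have h2 := mem_ball_iff_norm.mp hz
    rw [hunit y hy] at h1
    linarith
  have key : ∑ y ∈ F, volume (ball y (ε / 2)) ≤
      volume (ball (0 : EuclideanSpace ℝ (Fin m)) (1 + ε / 2)) := by
    rw [← measure_biUnion_finset hdisj fun b _ => measurableSet_ball]
    exact measure_mono (Set.iUnion₂_subset hsub)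
  rw [Finset.sum_congr rfl (fun y _ => hball y), Finset.sum_const, nsmul_eq_mul,
    Measure.addHaar_ball volume _ (by positivity : (0:ℝ) ≤ 1 + ε / 2),
    finrank_euclideanSpace_fin] at key
  have hV0 : volume (ball (0 : EuclideanSpace ℝ (Fin m)) 1) ≠ 0 :=
    (measure_ball_pos _ _ one_pos).ne'
  have hVt : volume (ball (0 : EuclideanSpace ℝ (Fin m)) 1) ≠ ⊤ := measure_ball_lt_top.ne
  rw [← mul_assoc] at key
  have key2 : ((F.card : ℕ) : ENNReal) * ENNReal.ofReal ((ε / 2) ^ m) ≤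
      ENNReal.ofReal ((1 + ε / 2) ^ m) :=
    (ENNReal.mul_le_mul_iff_left hV0 hVt).mp key
  have key3 : ENNReal.ofReal ((F.card : ℝ) * (ε / 2) ^ m) ≤
      ENNReal.ofReal ((1 + ε / 2) ^ m) := by
    rwa [ENNReal.ofReal_mul (by positivity), ENNReal.ofReal_natCast]
  exact (ENNReal.ofReal_le_ofReal_iff (by positivity)).mp key3

/-- existence of a net on the unit sphere of `ℝ^m` -/
lemma sphere_net {m : ℕ} (hm : 1 ≤ m) {ε : ℝ} (hε : 0 < ε) :
    ∃ N : Finset (EuclideanSpace ℝ (Fin m)),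
      (∀ y ∈ N, ‖y‖ = 1) ∧
      (∀ x : EuclideanSpace ℝ (Fin m), ‖x‖ = 1 → ∃ y ∈ N, ‖x - y‖ ≤ ε) ∧
      (N.card : ℝ) * (ε / 2) ^ m ≤ (1 + ε / 2) ^ m := by
  classical
  set E := EuclideanSpace ℝ (Fin m)
  set s : Set ℕ := {k | ∃ F : Finset E, (∀ y ∈ F, ‖y‖ = 1) ∧
      (∀ a ∈ F, ∀ b ∈ F, a ≠ b → ε < ‖a - b‖) ∧ F.card = k} with hs
  have h0 : 0 ∈ s := ⟨∅, by simp⟩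
  have hbdd : BddAbove s := by
    refine ⟨⌈(1 + ε / 2) ^ m / (ε / 2) ^ m⌉₊, ?_⟩
    rintro k ⟨F, hu, hsep, rfl⟩
    have hb := sep_bound hm hε F hu hsep
    have hp : (0 : ℝ) < (ε / 2) ^ m := by positivity
    have h1 : (F.card : ℝ) ≤ (1 + ε / 2) ^ m / (ε / 2) ^ m := by
      rw [le_div_iff₀ hp]; exact hb
    have h2 : (F.card : ℝ) ≤ (⌈(1 + ε / 2) ^ m / (ε / 2) ^ m⌉₊ : ℝ) :=
      h1.trans (Nat.le_ceil _)
    exact_mod_cast h2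
  obtain ⟨F, hu, hsep, hcard⟩ := Nat.sSup_mem ⟨0, h0⟩ hbdd
  refine ⟨F, hu, ?_, sep_bound hm hε F hu hsep⟩
  intro x hx
  by_contra hcon
  push_neg at hcon
  have hxF : x ∉ F := by
    intro h
    have := hcon x h
    simp at this
    linarith
  have hmem : F.card + 1 ∈ s := by
    refine ⟨insert x F, ?_, ?_, ?_⟩
    · intro y hy
      rcases Finset.mem_insert.mp hy with h | h
      · rw [h]; exact hx
      · exact hu y h
    · intro a ha b hb hab
      rcases Finset.mem_insert.mp ha with h1 | h1 <;>
        rcases Finset.mem_insert.mp hb with h2 | h2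
      · exact absurd (h1.trans h2.symm) hab
      · rw [h1]; exact hcon b h2
      · rw [h2, norm_sub_rev]; exact hcon a h1
      · exact hsep a h1 b h2 hab
    · rw [Finset.card_insert_of_notMem hxF]
  have := le_csSup hbdd hmem
  omega

/-- extension of a vector in `ℝ^m` to a vector in `ℝ^n` supported on `S` -/
def extMap {n m : ℕ} (S : Finset (Fin n)) (hS : S.card = m)
    (y : EuclideanSpace ℝ (Fin m)) : EuclideanSpace ℝ (Fin n) :=
  WithLp.toLp 2 (fun i => if h : i ∈ S then y ((S.orderIsoOfFin hS).symm ⟨i, h⟩) else 0)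

lemma extMap_support {n m : ℕ} (S : Finset (Fin n)) (hS : S.card = m)
    (y : EuclideanSpace ℝ (Fin m)) {i : Fin n} (h : extMap S hS y i ≠ 0) : i ∈ S := by
  by_contra hc
  apply h
  simp [extMap, hc]

lemma extMap_sub {n m : ℕ} (S : Finset (Fin n)) (hS : S.card = m)
    (y z : EuclideanSpace ℝ (Fin m)) :
    extMap S hS (y - z) = extMap S hS y - extMap S hS z := by
  ext i
  simp only [extMap, PiLp.sub_apply, PiLp.toLp_apply]
  by_cases h : i ∈ S <;> simp [h]

lemma extMap_norm {n m : ℕ} (S : Finset (Fin n)) (hS : S.card = m)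
    (y : EuclideanSpace ℝ (Fin m)) : ‖extMap S hS y‖ = ‖y‖ := by
  rw [EuclideanSpace.norm_eq, EuclideanSpace.norm_eq]
  congr 1
  have h1 : ∑ i : Fin n, ‖extMap S hS y i‖ ^ 2 = ∑ i ∈ S, ‖extMap S hS y i‖ ^ 2 := by
    refine (Finset.sum_subset (Finset.subset_univ S) ?_).symm
    intro i _ hi
    simp [extMap, hi]
  rw [h1]
  rw [← Finset.sum_attach S (fun i => ‖extMap S hS y i‖ ^ 2), ← Finset.univ_eq_attach,
    ← Equiv.sum_comp (S.orderIsoOfFin hS).toEquiv]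
  apply Finset.sum_congr rfl
  intro j _
  have hmem : ((S.orderIsoOfFin hS j : Fin n)) ∈ S := (S.orderIsoOfFin hS j).2
  have hsym : (S.orderIsoOfFin hS).symm ⟨((S.orderIsoOfFin hS) j : Fin n), hmem⟩ = j := by
    rw [show (⟨((S.orderIsoOfFin hS) j : Fin n), hmem⟩ : {x // x ∈ S}) = S.orderIsoOfFin hS j
      from Subtype.ext rfl]
    exact (S.orderIsoOfFin hS).symm_apply_apply j
  have happ : extMap S hS y ((S.orderIsoOfFin hS) j : Fin n) = y j := by
    simp only [extMap, PiLp.toLp_apply]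
    rw [dif_pos hmem]
    exact congrArg y hsym
  exact congrArg (fun t => ‖t‖ ^ 2) happ

lemma extMap_eq_self {n m : ℕ} (S : Finset (Fin n)) (hS : S.card = m)
    (w : EuclideanSpace ℝ (Fin n)) (hw : ∀ i ∉ S, w i = 0) :
    extMap S hS (WithLp.toLp 2 (fun j => w (S.orderIsoOfFin hS j))) = w := by
  ext i
  by_cases h : i ∈ S
  · simp only [extMap, h, dif_pos, PiLp.toLp_apply]
    refine congrArg w.ofLp ?_
    have := (S.orderIsoOfFin hS).apply_symm_apply ⟨i, h⟩
    exact congrArg Subtype.val this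
  · simp [extMap, h, hw i h]

set_option maxHeartbeats 1000000 in
/-- The set of compressible unit vectors admits a `(3c₁)`-net of cardinality at most
`(18/(c₀c₁))^{c₀ n}`, provided `n ≥ 2/c₀`. -/
theorem stmt9 {n : ℕ} (c₀ c₁ : ℝ) (h₀ : c₀ ∈ Set.Ioo (0 : ℝ) 1) (h₁ : c₁ ∈ Set.Ioo (0 : ℝ) 1)
    (hn : 2 / c₀ ≤ (n : ℝ)) :
    ∃ N : Finset (EuclideanSpace ℝ (Fin n)),
      (∀ y ∈ N, Compressible c₀ c₁ y) ∧
      (∀ x : EuclideanSpace ℝ (Fin n), Compressible c₀ c₁ x → ∃ y ∈ N, ‖x - y‖ ≤ 3 * c₁) ∧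
      (N.card : ℝ) ≤ (18 / (c₀ * c₁)) ^ (c₀ * (n : ℝ)) := by
  classical
  obtain ⟨hc0, hc0'⟩ := h₀
  obtain ⟨hc1, hc1'⟩ := h₁
  have hn2 : (2 : ℝ) ≤ c₀ * n := by
    rw [div_le_iff₀ hc0] at hn
    linarith [hn]
  set m := ⌊c₀ * (n : ℝ)⌋₊ with hm_def
  have hm_le : (m : ℝ) ≤ c₀ * n := Nat.floor_le (by positivity)
  have hm_gt : c₀ * n < m + 1 := Nat.lt_floor_add_one _
  have hm1 : 1 ≤ m := Nat.le_floor (by push_cast; linarith)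
  have hmpos : (0 : ℝ) < m := by exact_mod_cast hm1
  have hnpos : (0 : ℝ) < n := by nlinarith
  have hmn : m < n := by
    have : (m : ℝ) < n := by nlinarith
    exact_mod_cast this
  have h2m : c₀ * n ≤ 2 * m := by linarith
  obtain ⟨Nm, hNu, hNnet, hNcard⟩ := sphere_net hm1 hc1
  set N : Finset (EuclideanSpace ℝ (Fin n)) :=
    (Finset.powersetCard m (Finset.univ : Finset (Fin n))).attach.biUnion
      (fun S => Nm.image (extMap S.1 (Finset.mem_powersetCard_univ.mp S.2))) with hN_def
  have hmemN : ∀ w ∈ N, ∃ (S : Finset (Fin n)) (hS : S.card = m) (z : EuclideanSpace ℝ (Fin m)),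
      z ∈ Nm ∧ w = extMap S hS z := by
    intro w hw
    obtain ⟨S, _, hw2⟩ := Finset.mem_biUnion.mp hw
    obtain ⟨z, hz, hzw⟩ := Finset.mem_image.mp hw2
    exact ⟨S.1, Finset.mem_powersetCard_univ.mp S.2, z, hz, hzw.symm⟩
  refine ⟨N, ?_, ?_, ?_⟩
  · -- all members compressible
    intro w hw
    obtain ⟨S, hS, z, hz, rfl⟩ := hmemN w hw
    have hnorm : ‖extMap S hS z‖ = 1 := by rw [extMap_norm]; exact hNu z hz
    refine ⟨hnorm, extMap S hS z, ?_, by simp [hc1.le]⟩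
    unfold Sparse
    have hsub : (Finset.univ.filter fun i => extMap S hS z i ≠ 0) ⊆ S := by
      intro i hi
      exact extMap_support S hS z (Finset.mem_filter.mp hi).2
    calc ((Finset.univ.filter fun i => extMap S hS z i ≠ 0).card : ℝ)
        ≤ (S.card : ℝ) := by exact_mod_cast Finset.card_le_card hsub
      _ = m := by rw [hS]
      _ ≤ c₀ * n := hm_le
  · -- covering
    intro x hx
    obtain ⟨hx1, y, hy_sp, hy_close⟩ := hx
    have habs : |‖x‖ - ‖y‖| ≤ ‖x - y‖ := abs_norm_sub_norm_le x y
    rw [hx1] at habs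
    obtain ⟨habs1, habs2⟩ := abs_le.mp habs
    have hy_lb : 1 - c₁ ≤ ‖y‖ := by linarith
    have hy0 : y ≠ 0 := by
      intro h
      rw [h, norm_zero] at hy_lb
      linarith
    set yhat : EuclideanSpace ℝ (Fin n) := (‖y‖⁻¹ : ℝ) • y with hyhat_def
    have hyhat_norm : ‖yhat‖ = 1 := norm_smul_inv_norm hy0
    have hyyhat : ‖y - yhat‖ ≤ c₁ := by
      have h1 : y - yhat = (1 - ‖y‖⁻¹) • y := by
        rw [sub_smul, one_smul]
      rw [h1, norm_smul, Real.norm_eq_abs]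
      have hy_ne : ‖y‖ ≠ 0 := norm_ne_zero_iff.mpr hy0
      have e1 : |1 - ‖y‖⁻¹| * ‖y‖ = |(1 - ‖y‖⁻¹) * ‖y‖| := by rw [abs_mul, abs_norm]
      have e2 : (1 - ‖y‖⁻¹) * ‖y‖ = ‖y‖ - 1 := by field_simp
      rw [e1, e2, abs_sub_comm]
      exact habs.trans hy_close
    set T := Finset.univ.filter fun i => y i ≠ 0 with hT_def
    have hT : T.card ≤ m := Nat.le_floor hy_sp
    obtain ⟨S, hTS, -, hS⟩ := Finset.exists_subsuperset_card_eq (Finset.subset_univ T) hT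
      (by simpa using hmn.le)
    have hyhat_supp : ∀ i ∉ S, yhat i = 0 := by
      intro i hi
      have hiT : i ∉ T := fun h => hi (hTS h)
      have hyi : y i = 0 := by
        by_contra hc
        exact hiT (Finset.mem_filter.mpr ⟨Finset.mem_univ i, hc⟩)
      show (‖y‖⁻¹ : ℝ) • y i = 0
      rw [hyi, smul_zero]
    set u : EuclideanSpace ℝ (Fin m) := WithLp.toLp 2 (fun j => yhat (S.orderIsoOfFin hS j)) with hu_def
    have hu : extMap S hS u = yhat := extMap_eq_self S hS yhat hyhat_supp
    have hu_norm : ‖u‖ = 1 := by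
      rw [← hu, extMap_norm] at hyhat_norm
      exact hyhat_norm
    obtain ⟨z, hz, hzd⟩ := hNnet u hu_norm
    refine ⟨extMap S hS z, ?_, ?_⟩
    · exact Finset.mem_biUnion.mpr ⟨⟨S, Finset.mem_powersetCard_univ.mpr hS⟩,
        Finset.mem_attach _ _, Finset.mem_image_of_mem _ hz⟩
    · have hlast : ‖yhat - extMap S hS z‖ ≤ c₁ := by
        rw [← hu, ← extMap_sub, extMap_norm]
        exact hzd
      have hsplit : x - extMap S hS z = (x - y) + (y - yhat) + (yhat - extMap S hS z) := by
        abel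
      rw [hsplit]
      calc ‖(x - y) + (y - yhat) + (yhat - extMap S hS z)‖
          ≤ ‖x - y‖ + ‖y - yhat‖ + ‖yhat - extMap S hS z‖ := norm_add₃_le
        _ ≤ 3 * c₁ := by linarith
  · -- cardinality
    have hcard1 : N.card ≤ n.choose m * Nm.card := by
      calc N.card ≤ ∑ S ∈ (Finset.powersetCard m (Finset.univ : Finset (Fin n))).attach,
          (Nm.image (extMap S.1 (Finset.mem_powersetCard_univ.mp S.2))).card :=
            Finset.card_biUnion_le
        _ ≤ ∑ _S ∈ (Finset.powersetCard m (Finset.univ : Finset (Fin n))).attach, Nm.card :=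
            Finset.sum_le_sum fun S _ => Finset.card_image_le
        _ = (Finset.powersetCard m (Finset.univ : Finset (Fin n))).card * Nm.card := by
            rw [Finset.sum_const, Finset.card_attach, smul_eq_mul]
        _ = n.choose m * Nm.card := by
            rw [Finset.card_powersetCard, Finset.card_univ, Fintype.card_fin]
    have hc1pos : (0 : ℝ) < c₁ := hc1
    -- bound on Nm.card
    have hNm : (Nm.card : ℝ) ≤ (3 / c₁) ^ m := by
      have h1 : (Nm.card : ℝ) ≤ ((1 + c₁ / 2) / (c₁ / 2)) ^ m := by
        rw [div_pow, le_div_iff₀ (by positivity)]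
        exact hNcard
      have h2 : (1 + c₁ / 2) / (c₁ / 2) ≤ 3 / c₁ := by
        rw [div_le_div_iff₀ (by positivity) hc1pos]
        nlinarith
      exact h1.trans (pow_le_pow_left₀ (by positivity) h2 m)
    -- bound on the binomial coefficient
    have hchoose : (n.choose m : ℝ) ≤ ((n : ℝ) / m) ^ m * Real.exp 1 ^ m := by
      have h1 : (n.choose m : ℝ) ≤ (n : ℝ) ^ m / (m.factorial : ℝ) :=
        Nat.choose_le_pow_div m n
      have h2 : (m : ℝ) ^ m / (m.factorial : ℝ) ≤ Real.exp m :=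
        Real.pow_div_factorial_le_exp (x := (m : ℝ)) (Nat.cast_nonneg m) m
      have h3 : (n : ℝ) ^ m / (m.factorial : ℝ)
          = ((n : ℝ) / m) ^ m * ((m : ℝ) ^ m / (m.factorial : ℝ)) := by
        rw [div_pow]
        have hf : (0 : ℝ) < (m.factorial : ℝ) := by exact_mod_cast m.factorial_pos
        field_simp
      have h4 : Real.exp (m : ℝ) = Real.exp 1 ^ m := by
        rw [← Real.exp_nat_mul, mul_one]
      calc (n.choose m : ℝ) ≤ (n : ℝ) ^ m / (m.factorial : ℝ) := h1
        _ = ((n : ℝ) / m) ^ m * ((m : ℝ) ^ m / (m.factorial : ℝ)) := h3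
        _ ≤ ((n : ℝ) / m) ^ m * Real.exp m := by
            apply mul_le_mul_of_nonneg_left h2 (by positivity)
        _ = ((n : ℝ) / m) ^ m * Real.exp 1 ^ m := by rw [h4]
    set A := 18 / (c₀ * c₁) with hA_def
    have hbase : (n : ℝ) / m * Real.exp 1 * (3 / c₁) ≤ A := by
      have hnm : (n : ℝ) / m ≤ 2 / c₀ := by
        rw [div_le_div_iff₀ hmpos hc0]
        linarith
      have hexp : Real.exp 1 ≤ 3 := by
        have := Real.exp_one_lt_d9
        linarith
      have h5 : (n : ℝ) / m * Real.exp 1 * (3 / c₁) ≤ (2 / c₀) * 3 * (3 / c₁) := by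
        apply mul_le_mul _ le_rfl (by positivity) (by positivity)
        exact mul_le_mul hnm hexp (Real.exp_pos 1).le (by positivity)
      have h6 : (2 / c₀) * 3 * (3 / c₁) = A := by
        rw [hA_def]; field_simp; ring
      linarith
    have hA1 : (1 : ℝ) ≤ A := by
      rw [hA_def, le_div_iff₀ (by positivity)]
      nlinarith
    have hfinal : (N.card : ℝ) ≤ A ^ m := by
      calc (N.card : ℝ) ≤ (n.choose m : ℝ) * (Nm.card : ℝ) := by exact_mod_cast hcard1
        _ ≤ (((n : ℝ) / m) ^ m * Real.exp 1 ^ m) * (3 / c₁) ^ m := by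
            apply mul_le_mul hchoose hNm (by positivity) (by positivity)
        _ = ((n : ℝ) / m * Real.exp 1 * (3 / c₁)) ^ m := by rw [mul_pow, mul_pow]
        _ ≤ A ^ m := pow_le_pow_left₀ (by positivity) hbase m
    calc (N.card : ℝ) ≤ A ^ m := hfinal
      _ = A ^ (m : ℝ) := (Real.rpow_natCast A m).symm
      _ ≤ A ^ (c₀ * (n : ℝ)) := Real.rpow_le_rpow_of_exponent_le hA1 hm_le
end

section
/- Fix constants c₀, c₁ ∈ (0,1), set c₂ := (1/4)c₀c₁², and let γ ∈ (0, c₂), L ≥ 1. For every incompressible unit vector x ∈ Incomp(c₀,c₁), the regularized least common denominator satisfies D̂_L(x,γ) ≥ c√(γn), where c > 0 depends only on c₀ and c₁. -/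
open scoped ENNReal

/-- The least common denominator of `x` (infimum in `ℝ≥0∞`, so `∞` if no such `θ`). -/
noncomputable def LCD {m : Type*} [Fintype m] (L : ℝ) (x : EuclideanSpace ℝ m) : ℝ≥0∞ :=
  ⨅ θ ∈ {θ : ℝ | 0 < θ ∧
      Metric.infDist (θ • x) {z : EuclideanSpace ℝ m | ∀ i, ∃ q : ℤ, z i = (q : ℝ)} <
        L * Real.sqrt (max (Real.log (θ / L)) 0)},
    ENNReal.ofReal θ

lemma lcd_lb {m : Type*} [Fintype m] (L : ℝ) (hL : 0 < L) (y : EuclideanSpace ℝ m)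
    (hy : ‖y‖ = 1) (B : ℝ) (hB : 0 < B) (h : ∀ i, |y i| ≤ B) :
    ENNReal.ofReal (1 / (2 * B)) ≤ LCD L y := by
  refine le_iInf₂ fun θ hθ => ?_
  obtain ⟨hθpos, hdist⟩ := hθ
  refine ENNReal.ofReal_le_ofReal ?_
  by_contra hlt
  push_neg at hlt
  -- so θ < 1/(2B), hence |θ * y i| < 1/2
  have hcoord : ∀ i, |θ * y i| ≤ 1 / 2 := by
    intro i
    rw [abs_mul, abs_of_pos hθpos]
    calc θ * |y i| ≤ θ * B := by
          exact mul_le_mul_of_nonneg_left (h i) hθpos.le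
      _ ≤ (1 / (2 * B)) * B := by
          exact mul_le_mul_of_nonneg_right hlt.le hB.le
      _ = 1 / 2 := by field_simp
  -- infDist ≥ θ
  have hne : ({z : EuclideanSpace ℝ m | ∀ i, ∃ q : ℤ, z i = (q : ℝ)}).Nonempty :=
    ⟨0, fun i => ⟨0, by simp⟩⟩
  have hinf : θ ≤ Metric.infDist (θ • y)
      {z : EuclideanSpace ℝ m | ∀ i, ∃ q : ℤ, z i = (q : ℝ)} := by
    rw [← not_lt]
    intro hcon
    obtain ⟨z, hz, hdzlt⟩ := (Metric.infDist_lt_iff hne).mp hcon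
    refine absurd hdzlt (not_lt.mpr ?_)
    have hdz : dist (θ • y) z = Real.sqrt (∑ i, ((θ • y) i - z i) ^ 2) := by
      rw [EuclideanSpace.dist_eq]
      congr 1
      exact Finset.sum_congr rfl fun i _ => by rw [Real.dist_eq, sq_abs]
    rw [hdz]
    have hterm : ∀ i : m, (θ * y i) ^ 2 ≤ ((θ • y) i - z i) ^ 2 := by
      intro i
      obtain ⟨q, hq⟩ := hz i
      have h1 := hcoord i
      have h2 := abs_nonneg (θ * y i)
      have : (θ • y) i = θ * y i := rfl
      rw [this, hq]
      rcases eq_or_ne q 0 with rfl | hq0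
      · simp
      · have : (1 : ℝ) ≤ |(q : ℝ)| := by
          have := Int.one_le_abs hq0
          calc (1:ℝ) = ((1:ℤ):ℝ) := by norm_num
            _ ≤ ((|q|:ℤ):ℝ) := by exact_mod_cast this
            _ = |(q:ℝ)| := by push_cast; ring
        have habs : |θ * y i| ≤ |θ * y i - q| := by
          calc |θ * y i| ≤ 1/2 := h1
            _ ≤ |(q:ℝ)| - |θ * y i| := by linarith
            _ ≤ |θ * y i - q| := by
                have := abs_sub_abs_le_abs_sub (q:ℝ) (θ * y i)
                rw [abs_sub_comm] at this; linarith
        calc (θ * y i)^2 = |θ * y i|^2 := (sq_abs _).symm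
          _ ≤ |θ * y i - q|^2 := by
              exact pow_le_pow_left₀ (abs_nonneg _) habs 2
          _ = (θ * y i - q)^2 := sq_abs _
    have hsum : θ ^ 2 ≤ ∑ i, ((θ • y) i - z i) ^ 2 := by
      have h1 : (∑ i, (θ * y i) ^ 2) = θ ^ 2 := by
        have hnorm : Real.sqrt (∑ i, ‖y i‖ ^ 2) = 1 := by
          rw [← EuclideanSpace.norm_eq, hy]
        have hnn : (0:ℝ) ≤ ∑ i, ‖y i‖ ^ 2 :=
          Finset.sum_nonneg fun i _ => sq_nonneg ‖y i‖
        have : (∑ i, ‖y i‖ ^ 2) = 1 := by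
          nlinarith [Real.sq_sqrt hnn]
        calc (∑ i, (θ * y i) ^ 2) = θ^2 * ∑ i, ‖y i‖^2 := by
              rw [Finset.mul_sum]
              exact Finset.sum_congr rfl fun i _ => by
                rw [Real.norm_eq_abs, sq_abs]; ring
          _ = θ ^ 2 := by rw [this, mul_one]
      calc θ ^ 2 = ∑ i, (θ * y i)^2 := h1.symm
        _ ≤ _ := Finset.sum_le_sum fun i _ => hterm i
    calc θ = Real.sqrt (θ^2) := (Real.sqrt_sq hθpos.le).symm
      _ ≤ _ := Real.sqrt_le_sqrt hsum
  -- now contradiction with hdist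
  have hR : L * Real.sqrt (max (Real.log (θ / L)) 0) ≤ θ := by
    rcases le_or_gt θ L with hc | hc
    · have : Real.log (θ / L) ≤ 0 :=
        Real.log_nonpos (by positivity) (div_le_one_of_le₀ hc hL.le)
      rw [max_eq_right this, Real.sqrt_zero, mul_zero]
      exact hθpos.le
    · have ht1 : 1 < θ / L := (one_lt_div hL).mpr hc
      have hlog : Real.log (θ / L) ≤ θ / L - 1 :=
        Real.log_le_sub_one_of_pos (by positivity)
      have hmax : max (Real.log (θ / L)) 0 ≤ (θ / L) ^ 2 := by
        rw [max_le_iff]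
        constructor
        · nlinarith
        · positivity
      have : Real.sqrt (max (Real.log (θ / L)) 0) ≤ θ / L := by
        have h2 := Real.sqrt_le_sqrt hmax
        rwa [Real.sqrt_sq (by positivity : (0:ℝ) ≤ θ / L)] at h2
      calc L * Real.sqrt (max (Real.log (θ / L)) 0) ≤ L * (θ / L) :=
            mul_le_mul_of_nonneg_left this hL.le
        _ = θ := by field_simp
  linarith [hinf.trans_lt hdist, hR]

/-- Lower bound on the regularized LCD: there is `c > 0` depending only on `c₀, c₁` so that
for every incompressible `x`, any spread set `S` of `⌈c₂ n⌉` coordinates with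
`c₁/√(2n) ≤ |x_k| ≤ 1/√(c₀n)`, and `γ ∈ (0, c₂)`, `L ≥ 1`, the regularized LCD
`D̂_L(x,γ) = max {D_L(x_I/‖x_I‖) : I ⊆ S, |I| = ⌈γn⌉}` is at least `c √(γ n)`. -/
theorem stmt15 (c₀ c₁ : ℝ) (h₀ : c₀ ∈ Set.Ioo (0 : ℝ) 1) (h₁ : c₁ ∈ Set.Ioo (0 : ℝ) 1) :
    ∃ c : ℝ, 0 < c ∧
      ∀ (n : ℕ) (γ L : ℝ), γ ∈ Set.Ioo 0 ((1 / 4) * c₀ * c₁ ^ 2) → 1 ≤ L →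
      ∀ x : EuclideanSpace ℝ (Fin n), Incompressible c₀ c₁ x →
      ∀ S : Finset (Fin n), S.card = ⌈(1 / 4) * c₀ * c₁ ^ 2 * n⌉₊ →
        (∀ k ∈ S, c₁ / Real.sqrt (2 * n) ≤ |x k| ∧ |x k| ≤ 1 / Real.sqrt (c₀ * n)) →
        ENNReal.ofReal (c * Real.sqrt (γ * n)) ≤
          ⨆ I ∈ {I : Finset (Fin n) | I ⊆ S ∧ I.card = ⌈γ * n⌉₊},
            LCD L (WithLp.toLp 2 (fun i : {k // k ∈ I} =>
              x i / Real.sqrt (∑ j ∈ I, (x j) ^ 2)) : EuclideanSpace ℝ {k // k ∈ I}) := by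
  obtain ⟨hc₀, _⟩ := h₀
  obtain ⟨hc₁, _⟩ := h₁
  refine ⟨c₁ * Real.sqrt (c₀ / 2) / 2, by positivity, ?_⟩
  intro n γ L hγ hL x _ S hS hspread
  obtain ⟨hγ0, hγc₂⟩ := hγ
  rcases Nat.eq_zero_or_pos n with rfl | hn
  · simp
  have hn' : (0 : ℝ) < n := by exact_mod_cast hn
  -- choose the subset I
  have hcard : ⌈γ * (n : ℝ)⌉₊ ≤ S.card := by
    rw [hS]
    exact Nat.ceil_le_ceil (mul_le_mul_of_nonneg_right hγc₂.le hn'.le)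
  obtain ⟨I, hIS, hIcard⟩ := Finset.exists_subset_card_eq hcard
  set Ssum : ℝ := ∑ j ∈ I, (x j) ^ 2 with hSdef
  -- lower bound on Ssum
  have hlow : ∀ j ∈ I, c₁ ^ 2 / (2 * n) ≤ (x j) ^ 2 := by
    intro j hj
    have h := (hspread j (hIS hj)).1
    have h2 : (c₁ / Real.sqrt (2 * n)) ^ 2 ≤ |x j| ^ 2 :=
      pow_le_pow_left₀ (by positivity) h 2
    rwa [sq_abs, div_pow, Real.sq_sqrt (by positivity)] at h2
  have hSum1 : (⌈γ * (n : ℝ)⌉₊ : ℝ) * (c₁ ^ 2 / (2 * n)) ≤ Ssum := by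
    have := Finset.card_nsmul_le_sum I (fun j => (x j) ^ 2) (c₁ ^ 2 / (2 * n)) hlow
    rwa [nsmul_eq_mul, hIcard] at this
  have hceil : γ * (n : ℝ) ≤ (⌈γ * (n : ℝ)⌉₊ : ℝ) := Nat.le_ceil _
  have hSlb : γ * c₁ ^ 2 / 2 ≤ Ssum := by
    have h1 : γ * (n : ℝ) * (c₁ ^ 2 / (2 * n)) ≤ (⌈γ * (n : ℝ)⌉₊ : ℝ) * (c₁ ^ 2 / (2 * n)) :=
      mul_le_mul_of_nonneg_right hceil (by positivity)
    have h2 : γ * (n : ℝ) * (c₁ ^ 2 / (2 * n)) = γ * c₁ ^ 2 / 2 := by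
      field_simp
    linarith
  have hSq : (0 : ℝ) < γ * c₁ ^ 2 / 2 := by positivity
  have hSpos : 0 < Ssum := lt_of_lt_of_le hSq hSlb
  -- the normalized vector
  set y : EuclideanSpace ℝ {k // k ∈ I} :=
    WithLp.toLp 2 (fun i : {k // k ∈ I} => x i / Real.sqrt (∑ j ∈ I, (x j) ^ 2)) with hydef
  have hsum_coe : (∑ i : {k // k ∈ I}, (x (i : Fin n)) ^ 2) = Ssum := by
    rw [hSdef]
    exact Finset.sum_coe_sort I (fun j => (x j) ^ 2)
  have hynorm : ‖y‖ = 1 := by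
    rw [EuclideanSpace.norm_eq]
    have : ∀ i : {k // k ∈ I}, ‖y i‖ ^ 2 = (x (i : Fin n)) ^ 2 / Ssum := by
      intro i
      rw [hydef]
      simp only [PiLp.toLp_apply, Real.norm_eq_abs, sq_abs]
      rw [div_pow, Real.sq_sqrt hSpos.le]
    rw [Finset.sum_congr rfl fun i _ => this i, ← Finset.sum_div, hsum_coe,
      div_self hSpos.ne']
    exact Real.sqrt_one
  -- coordinate bound
  set a : ℝ := Real.sqrt (c₀ * n) with hadef
  set b : ℝ := Real.sqrt (γ * c₁ ^ 2 / 2) with hbdef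
  have ha : 0 < a := Real.sqrt_pos.mpr (by positivity)
  have hb : 0 < b := Real.sqrt_pos.mpr hSq
  set B : ℝ := (1 / a) / b with hBdef
  have hBpos : 0 < B := by positivity
  have hyB : ∀ i : {k // k ∈ I}, |y i| ≤ B := by
    intro i
    rw [hydef]
    simp only [PiLp.toLp_apply]
    rw [abs_div, abs_of_nonneg (Real.sqrt_nonneg _)]
    have hb2 : b ≤ Real.sqrt (∑ j ∈ I, (x j) ^ 2) := Real.sqrt_le_sqrt hSlb
    exact div_le_div₀ (by positivity) (hspread _ (hIS i.2)).2 hb hb2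
  have hLCD := lcd_lb L (lt_of_lt_of_le one_pos hL) y hynorm B hBpos hyB
  -- key constant inequality
  have hab : c₁ * (Real.sqrt (c₀ / 2) * Real.sqrt (γ * (n : ℝ))) = a * b := by
    have e1 : Real.sqrt (c₀ / 2) * Real.sqrt (γ * (n : ℝ))
        = Real.sqrt (c₀ / 2 * (γ * (n : ℝ))) :=
      (Real.sqrt_mul (by positivity) _).symm
    calc c₁ * (Real.sqrt (c₀ / 2) * Real.sqrt (γ * (n : ℝ)))
        = Real.sqrt (c₁ ^ 2) * Real.sqrt (c₀ / 2 * (γ * (n : ℝ))) := by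
          rw [e1, Real.sqrt_sq hc₁.le]
      _ = Real.sqrt (c₁ ^ 2 * (c₀ / 2 * (γ * (n : ℝ)))) :=
          (Real.sqrt_mul (sq_nonneg _) _).symm
      _ = Real.sqrt (c₀ * (n : ℝ) * (γ * c₁ ^ 2 / 2)) := by
          congr 1; ring
      _ = a * b := by
          rw [hadef, hbdef, Real.sqrt_mul (by positivity)]
  have h2B : 1 / (2 * B) = a * b / 2 := by
    rw [hBdef]
    field_simp
  have hle : c₁ * Real.sqrt (c₀ / 2) / 2 * Real.sqrt (γ * (n : ℝ)) ≤ 1 / (2 * B) := by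
    rw [h2B]
    nlinarith [hab]
  calc ENNReal.ofReal (c₁ * Real.sqrt (c₀ / 2) / 2 * Real.sqrt (γ * (n : ℝ)))
      ≤ ENNReal.ofReal (1 / (2 * B)) := ENNReal.ofReal_le_ofReal hle
    _ ≤ LCD L y := hLCD
    _ ≤ _ := le_iSup₂_of_le I (⟨hIS, hIcard⟩ :
        I ∈ {I : Finset (Fin n) | I ⊆ S ∧ I.card = ⌈γ * (n : ℝ)⌉₊}) le_rfl
end

section
/- Let V₁, ..., V_m be independent real random variables and let c > 0, c' ∈ (0,1), α ∈ (0,1) with ℙ(|Vᵢ| ≤ c) ≤ 1 − c' for each i. Then ℙ(∑_{i=1}^m Vᵢ² ≤ αc²m) ≤ binom(m, ⌈αm⌉)·(1 − c')^{m − ⌈αm⌉}. -/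
open MeasureTheory ProbabilityTheory
open scoped ENNReal

/-- Union bound for independent random variables with anti-concentration:
`ℙ(∑ Vᵢ² ≤ α c² m) ≤ C(m, ⌈αm⌉)(1 − c')^{m − ⌈αm⌉}`. -/
theorem stmt18 {Ω : Type*} [MeasurableSpace Ω] (P : Measure Ω) [IsProbabilityMeasure P]
    {m : ℕ} (V : Fin m → Ω → ℝ) (hmeas : ∀ i, Measurable (V i))
    (hindep : iIndepFun V P)
    (c c' α : ℝ) (hc : 0 < c) (hc' : c' ∈ Set.Ioo (0 : ℝ) 1) (hα : α ∈ Set.Ioo (0 : ℝ) 1)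
    (hV : ∀ i, P {ω | |V i ω| ≤ c} ≤ ENNReal.ofReal (1 - c')) :
    P {ω | ∑ i, (V i ω) ^ 2 ≤ α * c ^ 2 * m} ≤
      (m.choose ⌈α * m⌉₊ : ℝ≥0∞) * ENNReal.ofReal ((1 - c') ^ (m - ⌈α * m⌉₊)) := by
  obtain ⟨hc'0, hc'1⟩ := hc'
  obtain ⟨hα0, hα1⟩ := hα
  set k := m - ⌈α * m⌉₊ with hk
  set A : Fin m → Set Ω := fun i => {ω | |V i ω| ≤ c} with hA
  have hsub : {ω | ∑ i, (V i ω) ^ 2 ≤ α * c ^ 2 * m} ⊆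
      ⋃ s ∈ Finset.univ.powersetCard k, ⋂ i ∈ s, A i := by
    intro ω hω
    simp only [Set.mem_setOf_eq] at hω
    set T := Finset.univ.filter (fun i => c < |V i ω|) with hT
    have hTcard : T.card ≤ ⌈α * m⌉₊ := by
      have h1 : (T.card : ℝ) * c ^ 2 ≤ ∑ i ∈ T, (V i ω) ^ 2 := by
        have heq : (T.card : ℝ) * c ^ 2 = ∑ _i ∈ T, c ^ 2 := by
          rw [Finset.sum_const, nsmul_eq_mul]
        rw [heq]
        refine Finset.sum_le_sum fun i hi => ?_
        have hlt : c < |V i ω| := by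
          simpa [hT] using (Finset.mem_filter.mp hi).2
        calc c ^ 2 ≤ |V i ω| ^ 2 := pow_le_pow_left₀ hc.le hlt.le 2
          _ = (V i ω) ^ 2 := sq_abs _
      have h2 : ∑ i ∈ T, (V i ω) ^ 2 ≤ ∑ i, (V i ω) ^ 2 :=
        Finset.sum_le_sum_of_subset_of_nonneg (Finset.subset_univ _)
          (fun i _ _ => sq_nonneg _)
      have h3 : (T.card : ℝ) * c ^ 2 ≤ (α * m) * c ^ 2 := by
        calc (T.card : ℝ) * c ^ 2 ≤ α * c ^ 2 * m := le_trans h1 (le_trans h2 hω)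
          _ = (α * m) * c ^ 2 := by ring
      have h4 : (T.card : ℝ) ≤ α * m :=
        le_of_mul_le_mul_right h3 (pow_pos hc 2)
      exact_mod_cast h4.trans (Nat.le_ceil _)
    have hcompl : k ≤ Tᶜ.card := by
      rw [Finset.card_compl]
      simp only [Fintype.card_fin]
      exact Nat.sub_le_sub_left hTcard m
    obtain ⟨s, hs_sub, hs_card⟩ := Finset.exists_subset_card_eq hcompl
    simp only [Set.mem_iUnion]
    refine ⟨s, Finset.mem_powersetCard.mpr ⟨Finset.subset_univ _, hs_card⟩, ?_⟩
    refine Set.mem_iInter₂.mpr fun i hi => ?_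
    ·
      have : i ∈ Tᶜ := hs_sub hi
      rw [Finset.mem_compl, hT, Finset.mem_filter] at this
      simp only [Finset.mem_univ, true_and, not_lt] at this
      exact this
  calc P {ω | ∑ i, (V i ω) ^ 2 ≤ α * c ^ 2 * m}
      ≤ P (⋃ s ∈ Finset.univ.powersetCard k, ⋂ i ∈ s, A i) := measure_mono hsub
    _ ≤ ∑ s ∈ Finset.univ.powersetCard k, P (⋂ i ∈ s, A i) :=
        measure_biUnion_finset_le _ _
    _ ≤ ∑ s ∈ Finset.univ.powersetCard k, ENNReal.ofReal ((1 - c') ^ k) := by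
        refine Finset.sum_le_sum fun s hs => ?_
        have hcard : s.card = k := (Finset.mem_powersetCard.mp hs).2
        have hprod : P (⋂ i ∈ s, A i) = ∏ i ∈ s, P (A i) := by
          refine hindep.meas_biInter fun i _ => ?_
          exact ⟨{x | |x| ≤ c}, measurable_abs measurableSet_Iic, rfl⟩
        rw [hprod]
        calc ∏ i ∈ s, P (A i) ≤ ∏ _i ∈ s, ENNReal.ofReal (1 - c') :=
              Finset.prod_le_prod' fun i _ => hV i
          _ = ENNReal.ofReal (1 - c') ^ k := by rw [Finset.prod_const, hcard]
          _ = ENNReal.ofReal ((1 - c') ^ k) := (ENNReal.ofReal_pow (by linarith) k).symm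
    _ = (m.choose ⌈α * m⌉₊ : ℝ≥0∞) * ENNReal.ofReal ((1 - c') ^ k) := by
        rw [Finset.sum_const, Finset.card_powersetCard, Finset.card_univ,
          Fintype.card_fin, nsmul_eq_mul, hk,
          Nat.choose_symm (Nat.ceil_le.mpr (by nlinarith [Nat.cast_nonneg (α := ℝ) m]))]
end
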